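/- The three points P₁ = (−2·cos(π/9)·sin(2π/9), 2·cos(π/9)·cos(2π/9)), P₁' = (2·cos(π/9)·sin(π/9), −2·cos(π/9)·cos(π/9)) and T₁ = (−2√3·s, 2s) are collinear, where P₁' = R(P₁). -/
import Mathlib


/- STATEMENT 16: The three points P₁ = (−2cos(π/9)sin(2π/9), 2cos(π/9)cos(2π/9)),
P₁' = (2cos(π/9)sin(π/9), −2cos(π/9)cos(π/9)) and T₁ = (−2√3·s, 2s), with
s = sin(π/18)·cos(π/9), are collinear; moreover P₁' = R(P₁) where R is the
counterclockwise rotation by 8π/9 about the origin. -/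

open Real

noncomputable section

abbrev Pt := EuclideanSpace ℝ (Fin 2)

def pt (x y : ℝ) : Pt := (WithLp.equiv 2 _).symm ![x, y]

/-- Counterclockwise rotation by angle `θ` about the point `c`. -/
def rotAbout (θ : ℝ) (c p : Pt) : Pt :=
  pt (c 0 + Real.cos θ * (p 0 - c 0) - Real.sin θ * (p 1 - c 1))
     (c 1 + Real.sin θ * (p 0 - c 0) + Real.cos θ * (p 1 - c 1))

/-- The origin. -/
def O : Pt := pt 0 0

/-- The constant s = sin(π/18)·cos(π/9). -/
def s : ℝ := Real.sin (π / 18) * Real.cos (π / 9)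

/-- The point P₁. -/
def P₁ : Pt :=
  pt (-(2 * Real.cos (π / 9) * Real.sin (2 * π / 9)))
     (2 * Real.cos (π / 9) * Real.cos (2 * π / 9))

/-- The point P₁' = R(P₁). -/
def P₁' : Pt :=
  pt (2 * Real.cos (π / 9) * Real.sin (π / 9))
     (-(2 * Real.cos (π / 9) * Real.cos (π / 9)))

/-- The tangency point T₁ = (−2√3·s, 2s). -/
def T₁ : Pt := pt (-(2 * Real.sqrt 3 * s)) (2 * s)


lemma h1 : 2 * Real.sin (π/18) * Real.sin (π/9) = Real.cos (π/18) - Real.cos (π/6) := by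
  rw [Real.cos_sub_cos, show (π/18 + π/6)/2 = π/9 by ring,
    show (π/18 - π/6)/2 = -(π/18) by ring, Real.sin_neg]; ring

lemma h2 : 2 * Real.sin (π/18) * Real.sin (2*π/9) = Real.cos (π/6) - Real.cos (5*π/18) := by
  rw [Real.cos_sub_cos, show (π/6 + 5*π/18)/2 = 2*π/9 by ring,
    show (π/6 - 5*π/18)/2 = -(π/18) by ring, Real.sin_neg]; ring

lemma h3 : Real.cos (5*π/18) = Real.sin (2*π/9) := by
  rw [show (5*π/18 : ℝ) = π/2 - 2*π/9 by ring, Real.cos_pi_div_two_sub]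

lemma h4 : 2 * Real.sin (2*π/9) = Real.sqrt 3 * Real.sin (π/18) + Real.cos (π/18) := by
  rw [show (2*π/9 : ℝ) = π/18 + π/6 by ring, Real.sin_add, Real.cos_pi_div_six,
    Real.sin_pi_div_six]; ring

lemma g1 : 2 * Real.sin (π/18) * Real.cos (π/9) = Real.sin (π/6) - Real.sin (π/18) := by
  rw [Real.sin_sub_sin, show (π/6 + π/18)/2 = π/9 by ring, show (π/6 - π/18)/2 = π/18 by ring]

lemma g2 : 2 * Real.sin (π/18) * Real.cos (2*π/9) = Real.sin (5*π/18) - Real.sin (π/6) := by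
  rw [Real.sin_sub_sin, show (5*π/18 + π/6)/2 = 2*π/9 by ring,
    show (5*π/18 - π/6)/2 = π/18 by ring]

lemma g3 : Real.sin (5*π/18) = Real.cos (2*π/9) := by
  rw [show (5*π/18 : ℝ) = π/2 - 2*π/9 by ring, Real.sin_pi_div_two_sub]

lemma r1 : Real.cos (8*π/9) * Real.sin (2*π/9) + Real.sin (8*π/9) * Real.cos (2*π/9)
    = -Real.sin (π/9) := by
  have h : Real.sin (2*π/9 + 8*π/9)
      = Real.sin (2*π/9) * Real.cos (8*π/9) + Real.cos (2*π/9) * Real.sin (8*π/9) :=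
    Real.sin_add _ _
  rw [show (2*π/9 + 8*π/9 : ℝ) = π/9 + π by ring, Real.sin_add_pi] at h
  linarith

lemma r2 : Real.cos (8*π/9) * Real.cos (2*π/9) - Real.sin (8*π/9) * Real.sin (2*π/9)
    = -Real.cos (π/9) := by
  have h : Real.cos (2*π/9 + 8*π/9)
      = Real.cos (2*π/9) * Real.cos (8*π/9) - Real.sin (2*π/9) * Real.sin (8*π/9) :=
    Real.cos_add _ _
  rw [show (2*π/9 + 8*π/9 : ℝ) = π/9 + π by ring, Real.cos_add_pi] at h
  linarith

theorem P1_P1'_T1_collinear :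
    Collinear ℝ ({P₁, P₁', T₁} : Set Pt) ∧ rotAbout (8 * π / 9) O P₁ = P₁' := by
  have eP0 : P₁ 0 = -(2 * Real.cos (π / 9) * Real.sin (2 * π / 9)) := rfl
  have eP1 : P₁ 1 = 2 * Real.cos (π / 9) * Real.cos (2 * π / 9) := rfl
  have eQ0 : P₁' 0 = 2 * Real.cos (π / 9) * Real.sin (π / 9) := rfl
  have eQ1 : P₁' 1 = -(2 * Real.cos (π / 9) * Real.cos (π / 9)) := rfl
  have eT0 : T₁ 0 = -(2 * Real.sqrt 3 * s) := rfl
  have eT1 : T₁ 1 = 2 * s := rfl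
  constructor
  · rw [collinear_iff_of_mem (Set.mem_insert P₁ _)]
    refine ⟨P₁' - P₁, fun p hp => ?_⟩
    rcases hp with rfl | rfl | rfl
    · exact ⟨0, by simp⟩
    · exact ⟨1, by simp⟩
    · refine ⟨2 * Real.sin (π/18), ?_⟩
      have hi : ∀ i : Fin 2, ((2 * Real.sin (π/18)) • (P₁' - P₁) + P₁) i
          = (2 * Real.sin (π/18)) * (P₁' i - P₁ i) + P₁ i := by intro i; simp
      show T₁ = (2 * Real.sin (π/18)) • (P₁' - P₁) + P₁
      ext i
      fin_cases i
      · show T₁ 0 = ((2 * Real.sin (π/18)) • (P₁' - P₁) + P₁) 0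
        rw [hi 0, eT0, eP0, eQ0, s]
        linear_combination Real.cos (π/9) * (-2*h1 - 2*h2 + 2*h3 + 2*h4)
      · show T₁ 1 = ((2 * Real.sin (π/18)) • (P₁' - P₁) + P₁) 1
        rw [hi 1, eT1, eP1, eQ1, s]
        linear_combination Real.cos (π/9) * (2*g1 + 2*g2 + 2*g3)
  · have e1 : O 0 + Real.cos (8 * π / 9) * (P₁ 0 - O 0) - Real.sin (8 * π / 9) * (P₁ 1 - O 1)
        = 2 * Real.cos (π / 9) * Real.sin (π / 9) := by
      rw [eP0, eP1, show O 0 = 0 from rfl, show O 1 = 0 from rfl]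
      linear_combination (-2 * Real.cos (π/9)) * r1
    have e2 : O 1 + Real.sin (8 * π / 9) * (P₁ 0 - O 0) + Real.cos (8 * π / 9) * (P₁ 1 - O 1)
        = -(2 * Real.cos (π / 9) * Real.cos (π / 9)) := by
      rw [eP0, eP1, show O 0 = 0 from rfl, show O 1 = 0 from rfl]
      linear_combination (2 * Real.cos (π/9)) * r2
    rw [rotAbout, e1, e2]; rfl
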